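/- Let f : ℝⁿ → ℝ be convex and differentiable with minimizer X⋆, and let X : [0,∞) → ℝⁿ satisfy the gradient flow Ẋ(t) = −∇f(X(t)) with X(0) = X₀. Then for all t > 0, f(X(t)) − f⋆ ≤ ‖X₀ − X⋆‖²/(2t). -/

import Mathlib

open Filter MeasureTheory
open scoped RealInnerProductSpace Topology

theorem gradient_flow_rate
    {E : Type*} [NormedAddCommGroup E] [InnerProductSpace ℝ E] [CompleteSpace E]
    (f : E → ℝ) (g : E → E)
    (hgrad : ∀ x, HasGradientAt f (g x) x)
    (hconv : ∀ x y, 0 ≤ f x - f y - ⟪g y, x - y⟫)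
    (X : ℝ → E)
    (hX' : ∀ t ∈ Set.Ici (0:ℝ), HasDerivAt X (-(g (X t))) t)
    (X₀ : E) (hX0 : X 0 = X₀)
    (Xs : E) (hmin : ∀ x, f Xs ≤ f x) :
    ∀ t > (0:ℝ), f (X t) - f Xs ≤ ‖X₀ - Xs‖ ^ 2 / (2 * t) := by
  intro t ht
  set G : ℝ → E := fun s => g (X s) with hG
  set L : ℝ → ℝ := fun s =>
    s * (f (X s) - f Xs) + ⟪X s - Xs, X s - Xs⟫ / 2 with hL
  set D : ℝ → ℝ := fun s =>
    (1 * (f (X s) - f Xs) + s * ⟪G s, -(G s)⟫) +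
      (⟪X s - Xs, -(G s)⟫ + ⟪-(G s), X s - Xs⟫) / 2 with hD
  have hderiv : ∀ s ∈ Set.Ici (0:ℝ), HasDerivAt L (D s) s := by
    intro s hs
    have h1 : HasDerivAt (fun u => f (X u)) ⟪G s, -(G s)⟫ s := by
      have := (hgrad (X s)).hasFDerivAt.comp_hasDerivAt s (hX' s hs)
      exact HasDerivAt.congr_deriv (this : HasDerivAt (fun u => f (X u)) _ s) (by simp [hG])
    have h2 : HasDerivAt (fun u => u * (f (X u) - f Xs))
        (1 * (f (X s) - f Xs) + s * ⟪G s, -(G s)⟫) s :=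
      (hasDerivAt_id s).mul (h1.sub_const _)
    have h3 : HasDerivAt (fun u => (⟪X u - Xs, X u - Xs⟫ : ℝ) / 2)
        ((⟪X s - Xs, -(G s)⟫ + ⟪-(G s), X s - Xs⟫) / 2) s :=
      (((hX' s hs).sub_const Xs).inner ℝ ((hX' s hs).sub_const Xs)).div_const 2
    exact h2.add h3
  have hDnonpos : ∀ s ∈ Set.Ici (0:ℝ), D s ≤ 0 := by
    intro s hs
    have hc := hconv Xs (X s)
    have h1 : (⟪g (X s), Xs - X s⟫ : ℝ) = -⟪g (X s), X s - Xs⟫ := by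
      rw [show Xs - X s = -(X s - Xs) by abel, inner_neg_right]
    have h2 : (⟪G s, -(G s)⟫ : ℝ) = -‖G s‖ ^ 2 := by
      rw [inner_neg_right, real_inner_self_eq_norm_sq]
    have h3 : (⟪-(G s), X s - Xs⟫ : ℝ) = -⟪G s, X s - Xs⟫ := by
      rw [inner_neg_left]
    have h4 : (⟪X s - Xs, -(G s)⟫ : ℝ) = -⟪G s, X s - Xs⟫ := by
      rw [inner_neg_right, real_inner_comm]
    have hs' : (0:ℝ) ≤ s := hs
    have hn : (0:ℝ) ≤ ‖G s‖ ^ 2 := sq_nonneg _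
    rw [h1] at hc
    simp only [hD, h2, h3, h4]
    nlinarith [mul_nonneg hs' hn]
  have hanti : AntitoneOn L (Set.Icc 0 t) := by
    apply antitoneOn_of_deriv_nonpos (convex_Icc 0 t)
    · intro s hs
      exact (hderiv s hs.1).continuousAt.continuousWithinAt
    · intro s hs
      rw [interior_Icc] at hs
      exact (hderiv s (le_of_lt hs.1)).differentiableAt.differentiableWithinAt
    · intro s hs
      rw [interior_Icc] at hs
      rw [(hderiv s (le_of_lt hs.1)).deriv]
      exact hDnonpos s (le_of_lt hs.1)
  have hLt : L t ≤ L 0 :=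
    hanti (Set.left_mem_Icc.2 ht.le) (Set.right_mem_Icc.2 ht.le) ht.le
  have hL0 : L 0 = ‖X₀ - Xs‖ ^ 2 / 2 := by
    simp [hL, hX0, real_inner_self_eq_norm_sq]
  have hlow : t * (f (X t) - f Xs) ≤ L t := by
    have := real_inner_self_nonneg (x := X t - Xs)
    simp only [hL]; linarith
  rw [hL0] at hLt
  rw [le_div_iff₀ (by positivity)]
  have hfin := hlow.trans hLt
  nlinarith [hfin]
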